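/- Let G be a locally compact group and let φ: M(G) → M(G) be a continuous surjective algebra homomorphism. If M(G) is (φ,φ)-weakly amenable, then there is no non-zero continuous point derivation at any character of M(G) of the form ψ ∘ φ with ψ a character of M(G); consequently G is discrete and M(G) is weakly amenable. -/

import Mathlib

/-- Ordinary weak amenability of a Banach algebra `M`: every continuous derivation
`d : M → M*` (with the canonical dual bimodule actions, i.e.
`⟨d(ab), x⟩ = ⟨d a, bx⟩ + ⟨d b, xa⟩`) is inner (`⟨d a, x⟩ = ⟨ξ, ax⟩ - ⟨ξ, xa⟩`). -/
def WeaklyAmenable (M : Type*) [NormedRing M] [NormedAlgebra ℂ M] : Prop :=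
  ∀ d : M →L[ℂ] M →L[ℂ] ℂ,
    (∀ a b x : M, d (a * b) x = d a (b * x) + d b (x * a)) →
    ∃ ξ : M →L[ℂ] ℂ, ∀ a x : M, d a x = ξ (a * x) - ξ (x * a)

/-- No non-zero continuous point derivation exists at any character of `M`. -/
def NoPointDerivations (M : Type*) [NormedRing M] [NormedAlgebra ℂ M] : Prop :=
  ∀ χ : M →L[ℂ] ℂ, χ ≠ 0 → (∀ a b : M, χ (a * b) = χ a * χ b) →
    ∀ D : M →L[ℂ] ℂ, (∀ a b : M, D (a * b) = D a * χ b + χ a * D b) → D = 0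

/-!
STATEMENT 4.  Let `G` be a locally compact group and `φ : M(G) → M(G)` a continuous
surjective algebra homomorphism on the measure algebra `M(G)` (modelled abstractly as a
Banach algebra `M` containing the point masses `δ_t`).  If `M(G)` is `(φ,φ)`-weakly
amenable then there is no non-zero continuous point derivation at any character of
`M(G)` of the form `ψ ∘ φ` with `ψ` a character of `M(G)`; consequently (by the
Dales–Ghahramani–Helemskii theorem, taken as a hypothesis) `G` is discrete and `M(G)`
is weakly amenable.
-/
theorem stmt4
    {G : Type*} [Group G] [TopologicalSpace G] [IsTopologicalGroup G]
    [LocallyCompactSpace G] [T2Space G]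
    {M : Type*} [NormedRing M] [NormedAlgebra ℂ M] [CompleteSpace M]
    -- the point masses `δ_t ∈ M(G)`
    (dirac : G → M)
    (hdiracinj : Function.Injective dirac)
    (hdiracmul : ∀ s t : G, dirac s * dirac t = dirac (s * t))
    (hdiracone : dirac 1 = 1)
    (hdiracnorm : ∀ t : G, ‖dirac t‖ = 1)
    -- the Dales–Ghahramani–Helemskii theorem for `M(G)`:
    -- `M(G)` is weakly amenable iff `G` is discrete iff there is no non-zero
    -- continuous point derivation at a character of `M(G)`
    (hDGH₁ : WeaklyAmenable M ↔ DiscreteTopology G)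
    (hDGH₂ : WeaklyAmenable M ↔ NoPointDerivations M)
    -- `φ`: a continuous surjective algebra homomorphism on `M(G)`
    (φ : M →L[ℂ] M)
    (hφ : ∀ a b : M, φ (a * b) = φ a * φ b)
    (hφonto : Function.Surjective φ)
    -- `M(G)` is `(φ,φ)`-weakly amenable
    (hWA : ∀ d : M →L[ℂ] M →L[ℂ] ℂ,
      (∀ a b x : M, d (a * b) x = d a (φ b * x) + d b (x * φ a)) →
      ∃ ξ : M →L[ℂ] ℂ, ∀ a x : M, d a x = ξ (φ a * x) - ξ (x * φ a)) :
    -- then: no non-zero continuous point derivation at characters of the form `ψ ∘ φ`,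
    -- `G` is discrete, and `M(G)` is weakly amenable
    (∀ ψ : M →L[ℂ] ℂ, ψ ≠ 0 → (∀ a b : M, ψ (a * b) = ψ a * ψ b) →
      ∀ D : M →L[ℂ] ℂ,
        (∀ a b : M, D (a * b) = D a * ψ (φ b) + ψ (φ a) * D b) → D = 0) ∧
    DiscreteTopology G ∧ WeaklyAmenable M := by
  have hNPD : NoPointDerivations M := by
    intro χ hχ hχmul D hD
    -- the twisted derivation d a x = D (φ a) * χ x
    set d : M →L[ℂ] M →L[ℂ] ℂ := (D.comp φ).smulRight χ with hd
    have hdapp : ∀ a x : M, d a x = D (φ a) * χ x := by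
      intro a x; simp [hd, smul_eq_mul]
    obtain ⟨ξ, hξ⟩ := hWA d (by
      intro a b x
      simp only [hdapp, hφ, hD, hχmul]
      ring)
    have key : ∀ a x : M, D (φ a) * χ x = ξ (φ a * x) - ξ (x * φ a) := by
      intro a x; rw [← hdapp a x]; exact hξ a x
    have anti : ∀ a c : M, D (φ a) * χ (φ c) = -(D (φ c) * χ (φ a)) := by
      intro a c; rw [key, key]; ring
    obtain ⟨m, hm⟩ : ∃ m : M, χ m ≠ 0 := by
      by_contra h
      push_neg at h
      exact hχ (ContinuousLinearMap.ext h)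
    obtain ⟨b, rfl⟩ := hφonto m
    have hb : D (φ b) = 0 := by
      have h2 := anti b b
      have : D (φ b) * χ (φ b) = 0 := by linear_combination h2 / 2
      exact (mul_eq_zero.mp this).resolve_right hm
    have hall : ∀ a : M, D (φ a) = 0 := by
      intro a
      have := anti a b
      rw [hb, zero_mul, neg_zero] at this
      exact (mul_eq_zero.mp this).resolve_right hm
    ext x
    obtain ⟨a, rfl⟩ := hφonto x
    simpa using hall a
  have hWAM : WeaklyAmenable M := hDGH₂.mpr hNPD
  refine ⟨?_, hDGH₁.mp hWAM, hWAM⟩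
  intro ψ hψ hψmul D hD
  refine hNPD (ψ.comp φ) ?_ ?_ D hD
  · obtain ⟨m, hm⟩ : ∃ m : M, ψ m ≠ 0 := by
      by_contra h
      push_neg at h
      exact hψ (ContinuousLinearMap.ext h)
    obtain ⟨a, rfl⟩ := hφonto m
    intro h0
    exact hm (by simpa using congrArg (fun f : M →L[ℂ] ℂ => f a) h0)
  · intro a b
    simp [hφ, hψmul]
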